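/- For the mixture family with τ > 0: suppose ζ > 0 satisfies z^T J(θ) z ≥ ζ for all unit vectors z ∈ ℝ^K and all θ ∈ Θ_τ. Then for every θ ∈ Θ_τ and every x ∈ 𝒳, ‖V(θ;x)‖_M ≤ K√K/(ζτ²) + 1, where V(θ;x) = J(θ)^{−1/2} Ĵ(θ;x) J(θ)^{−1/2} − I and ‖·‖_M is the entrywise max norm. -/

import Mathlib

open MeasureTheory Matrix

noncomputable section

/-- Euclidean norm on `Fin K → ℝ`. -/
def euclNorm {K : ℕ} (v : Fin K → ℝ) : ℝ := Real.sqrt (∑ i, (v i) ^ 2)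

/-- The mixture density `p_θ = θ₀ q₀ + Σ_{i=1}^K θᵢ qᵢ`, where `θ₀ = 1 − Σᵢ θᵢ`. -/
def mixP {K : ℕ} {X : Type*} (q : Fin (K + 1) → X → ℝ) (θ : Fin K → ℝ) (x : X) : ℝ :=
  (1 - ∑ i, θ i) * q 0 x + ∑ i : Fin K, θ i * q i.succ x

/-- The restricted parameter set
`Θ_τ = {θ ∈ [0,1]^K : θᵢ ≥ τ for all i ∈ {0,…,K}}` (with `θ₀ = 1 − Σᵢ θᵢ`). -/
def ThetaTau (K : ℕ) (τ : ℝ) : Set (Fin K → ℝ) :=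
  {θ | (∀ i, 0 ≤ θ i ∧ θ i ≤ 1) ∧ (∀ i, τ ≤ θ i) ∧ τ ≤ 1 - ∑ i, θ i}

/-- Empirical Fisher information of the mixture family (one observation):
`Ĵ_{ij}(θ;x) = (qᵢ(x)−q₀(x))(q_j(x)−q₀(x))/p_θ(x)²`. -/
def mixJhat1 {K : ℕ} {X : Type*} (q : Fin (K + 1) → X → ℝ) (θ : Fin K → ℝ) (x : X) :
    Matrix (Fin K) (Fin K) ℝ :=
  Matrix.of fun i j => (q i.succ x - q 0 x) * (q j.succ x - q 0 x) / (mixP q θ x) ^ 2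

/-- Empirical Fisher information of the mixture family for a sample `x^n`. -/
def mixJhatN {K : ℕ} {X : Type*} (q : Fin (K + 1) → X → ℝ) {n : ℕ} (θ : Fin K → ℝ)
    (xn : Fin n → X) : Matrix (Fin K) (Fin K) ℝ :=
  (n : ℝ)⁻¹ • ∑ t, mixJhat1 q θ (xn t)

/-- Fisher information of the mixture family: `J(θ) = E_{p_θ}[Ĵ(θ;X)]`. -/
def mixJ {K : ℕ} {X : Type*} [MeasurableSpace X] (μ : Measure X)
    (q : Fin (K + 1) → X → ℝ) (θ : Fin K → ℝ) : Matrix (Fin K) (Fin K) ℝ :=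
  Matrix.of fun i j => ∫ x, mixP q θ x * mixJhat1 q θ x i j ∂μ

/-- Entrywise maximum norm of a `K×K` real matrix. -/
def mnorm {K : ℕ} (V : Matrix (Fin K) (Fin K) ℝ) : ℝ :=
  ⨆ ij : Fin K × Fin K, |V ij.1 ij.2|

/-- The inverse of the positive definite square root of a positive definite matrix
(junk value `1` if the matrix is not positive definite). -/
def invSqrtM {K : ℕ} (A : Matrix (Fin K) (Fin K) ℝ) : Matrix (Fin K) (Fin K) ℝ :=
  letI := Classical.propDecidable
  if h : A.PosDef then (h.posSemidef.1.eigenvectorUnitary.1 * diagonal ((↑) ∘ (√·) ∘ h.posSemidef.1.eigenvalues) *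
    (star h.posSemidef.1.eigenvectorUnitary : Matrix (Fin K) (Fin K) ℝ))⁻¹ else 1


lemma invSqrtM_spec {K : ℕ} (A : Matrix (Fin K) (Fin K) ℝ) (hA : A.PosDef) :
    ∃ R : Matrix (Fin K) (Fin K) ℝ, invSqrtM A = R⁻¹ ∧ R.IsHermitian ∧ R * R = A := by
  unfold invSqrtM
  rw [dif_pos hA]
  refine ⟨hA.posSemidef.1.eigenvectorUnitary.1 * diagonal ((↑) ∘ (√·) ∘ hA.posSemidef.1.eigenvalues) *
    (star hA.posSemidef.1.eigenvectorUnitary : Matrix (Fin K) (Fin K) ℝ), ?_, ?_, ?_⟩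
  · congr!
  · simp [IsHermitian, Matrix.star_eq_conjTranspose, conjTranspose_eq_transpose_of_trivial, mul_assoc]
  · have hU : star (hA.posSemidef.1.eigenvectorUnitary.1 : Matrix (Fin K) (Fin K) ℝ)
        * hA.posSemidef.1.eigenvectorUnitary.1 = 1 := by simp
    rw [show ∀ (A B C : Matrix (Fin K) (Fin K) ℝ), A * B * C * (A * B * C) = A * (B * (C * A) * B) * C
      from fun A B C => by simp only [mul_assoc]]
    rw [hU, mul_one, diagonal_mul_diagonal]
    conv_rhs => rw [hA.posSemidef.1.spectral_theorem]
    rw [Unitary.conjStarAlgAut_apply]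
    congr 2
    ext i j
    simp only [diagonal_apply]
    split_ifs
    · exact Real.mul_self_sqrt (hA.posSemidef.eigenvalues_nonneg i)
    · rfl

lemma sumsq_pos {K : ℕ} (z : Fin K → ℝ) (hz : z ≠ 0) : 0 < ∑ i, z i ^ 2 := by
  obtain ⟨i, hi⟩ := Function.ne_iff.mp hz
  have h0 : 0 < z i ^ 2 := (sq_nonneg _).lt_of_ne (Ne.symm (pow_ne_zero 2 hi))
  exact lt_of_lt_of_le h0
    (Finset.single_le_sum (f := fun j => z j ^ 2) (fun j _ => sq_nonneg (z j)) (Finset.mem_univ i))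

lemma quad_lower {K : ℕ} (J : Matrix (Fin K) (Fin K) ℝ) (ζ : ℝ)
    (h : ∀ z : Fin K → ℝ, (∑ i, (z i) ^ 2) = 1 → ζ ≤ z ⬝ᵥ J.mulVec z) :
    ∀ u : Fin K → ℝ, ζ * (∑ i, (u i) ^ 2) ≤ u ⬝ᵥ J.mulVec u := by
  intro u
  by_cases hu : u = 0
  · subst hu; simp
  · set s := ∑ i, u i ^ 2 with hs
    have hspos : 0 < s := sumsq_pos u hu
    set c := Real.sqrt s with hc
    have hcpos : 0 < c := Real.sqrt_pos.mpr hspos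
    have hc2 : c ^ 2 = s := Real.sq_sqrt hspos.le
    have hz := h (c⁻¹ • u) ?_
    · have hq : (c⁻¹ • u) ⬝ᵥ J.mulVec (c⁻¹ • u) = c⁻¹ * (c⁻¹ * (u ⬝ᵥ J.mulVec u)) := by
        rw [Matrix.mulVec_smul, smul_dotProduct, dotProduct_smul]; simp [smul_eq_mul]
      rw [hq] at hz
      have := mul_le_mul_of_nonneg_left hz (le_of_lt (mul_pos hcpos hcpos))
      have hcc : c * c = s := by nlinarith
      calc ζ * s = (c * c) * ζ := by rw [hcc]; ring
        _ ≤ (c * c) * (c⁻¹ * (c⁻¹ * (u ⬝ᵥ J.mulVec u))) := this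
        _ = u ⬝ᵥ J.mulVec u := by field_simp
    · simp only [Pi.smul_apply, smul_eq_mul, mul_pow]
      rw [← Finset.mul_sum, ← hs]
      field_simp [hc2.symm]
      linarith [hc2]

lemma inv_quad_upper {K : ℕ} (J : Matrix (Fin K) (Fin K) ℝ) (ζ : ℝ) (hζ : 0 < ζ)
    (hdet : IsUnit J.det)
    (hquad : ∀ u : Fin K → ℝ, ζ * (∑ i, (u i) ^ 2) ≤ u ⬝ᵥ J.mulVec u) :
    ∀ v : Fin K → ℝ, v ⬝ᵥ J⁻¹.mulVec v ≤ ζ⁻¹ * ∑ i, (v i) ^ 2 := by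
  intro v
  set u := J⁻¹.mulVec v with hu
  have hJu : J.mulVec u = v := by
    rw [hu, Matrix.mulVec_mulVec, Matrix.mul_nonsing_inv _ hdet, Matrix.one_mulVec]
  set a := ∑ i, u i ^ 2 with ha
  set b := ∑ i, v i ^ 2 with hb
  have ha0 : 0 ≤ a := Finset.sum_nonneg fun i _ => sq_nonneg _
  have hb0 : 0 ≤ b := Finset.sum_nonneg fun i _ => sq_nonneg _
  set t := v ⬝ᵥ u with ht
  have h1 : ζ * a ≤ t := by
    have := hquad u
    rwa [hJu, dotProduct_comm] at this
  have h2 : t ^ 2 ≤ b * a := by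
    have := Finset.sum_mul_sq_le_sq_mul_sq Finset.univ v u
    simpa [ht, dotProduct] using this
  show t ≤ ζ⁻¹ * b
  rcases le_or_gt t 0 with h | h
  · exact h.trans (by positivity)
  · have hfin : ζ * t ≤ b := by
      nlinarith [h1, h2, mul_le_mul_of_nonneg_right h1 hb0, mul_le_mul_of_nonneg_left h2 hζ.le]
    calc t = ζ⁻¹ * (ζ * t) := by field_simp
      _ ≤ ζ⁻¹ * b := mul_le_mul_of_nonneg_left hfin (inv_nonneg.mpr hζ.le)

/-- **Lemma 10.** For the mixture family with `τ > 0`: if `ζ > 0` is a lower bound for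
the quadratic form of `J(θ)` over Euclidean unit vectors on `Θ_τ`, then for every
`θ ∈ Θ_τ` and every `x`, `‖V(θ;x)‖_M ≤ K√K/(ζτ²) + 1`, where
`V(θ;x) = J(θ)^{−1/2} Ĵ(θ;x) J(θ)^{−1/2} − I`. -/
theorem stmt17 {K : ℕ} {X : Type*} [MeasurableSpace X] (μ : Measure X) [SigmaFinite μ]
    (q : Fin (K + 1) → X → ℝ) (hq_meas : ∀ i, Measurable (q i))
    (hq_nonneg : ∀ i x, 0 ≤ q i x) (hq_prob : ∀ i, ∫ x, q i x ∂μ = 1)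
    (τ : ℝ) (hτ : 0 < τ) (hτ' : τ ≤ 1 / (K + 1))
    (ζ : ℝ) (hζ : 0 < ζ)
    (hζJ : ∀ θ ∈ ThetaTau K τ, ∀ z : Fin K → ℝ, (∑ i, (z i) ^ 2) = 1 →
      ζ ≤ z ⬝ᵥ (mixJ μ q θ).mulVec z) :
    ∀ θ ∈ ThetaTau K τ, ∀ x : X,
      mnorm (invSqrtM (mixJ μ q θ) * mixJhat1 q θ x * invSqrtM (mixJ μ q θ) - 1)
        ≤ K * Real.sqrt K / (ζ * τ ^ 2) + 1 := by
  intro θ hθ x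
  obtain ⟨hθ1, hθ2, hθ3⟩ := hθ
  set J := mixJ μ q θ with hJdef
  -- J is symmetric
  have hJsymm : J.IsHermitian := by
    show Jᴴ = J
    ext i j
    simp only [hJdef, mixJ, Matrix.conjTranspose_apply, Matrix.of_apply, star_trivial, mixJhat1]
    congr 1
    ext y
    ring
  -- J is positive definite
  have hζJ' := hζJ θ ⟨hθ1, hθ2, hθ3⟩
  have hquad : ∀ u : Fin K → ℝ, ζ * (∑ i, (u i) ^ 2) ≤ u ⬝ᵥ J.mulVec u :=
    quad_lower J ζ hζJ'
  have hJpd : J.PosDef := by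
    refine Matrix.PosDef.of_dotProduct_mulVec_pos hJsymm fun z hz => ?_
    have h1 : 0 < ζ * ∑ i, (z i) ^ 2 := mul_pos hζ (sumsq_pos z hz)
    have h2 := hquad z
    simpa [star_trivial] using h1.trans_le h2
  have hdet : IsUnit J.det := hJpd.det_pos.ne'.isUnit
  set S := invSqrtM J with hSdef
  obtain ⟨R, hS, hRH, hRR⟩ : ∃ R : Matrix (Fin K) (Fin K) ℝ,
      S = R⁻¹ ∧ R.IsHermitian ∧ R * R = J := invSqrtM_spec J hJpd
  have hSH : S.IsHermitian := by
    rw [hS]; exact hRH.inv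
  have hST : Sᵀ = S := by
    ext i j
    simpa using hSH.apply i j
  have hSS : S * S = J⁻¹ := by
    rw [hS, ← Matrix.mul_inv_rev, hRR]
  set p := mixP q θ x with hpdef
  set v : Fin K → ℝ := fun i => q i.succ x - q 0 x with hvdef
  set w := S.mulVec v with hwdef
  -- basic bounds on p and v
  have hsum_nonneg : 0 ≤ ∑ i : Fin K, θ i * q i.succ x :=
    Finset.sum_nonneg fun i _ => mul_nonneg (hθ1 i).1 (hq_nonneg _ _)
  have hq0p : τ * q 0 x ≤ p := by
    have h1 : τ * q 0 x ≤ (1 - ∑ i, θ i) * q 0 x :=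
      mul_le_mul_of_nonneg_right hθ3 (hq_nonneg _ _)
    simp only [hpdef, mixP]
    linarith
  have hqip : ∀ i : Fin K, τ * q i.succ x ≤ p := by
    intro i
    have h1 : τ * q i.succ x ≤ θ i * q i.succ x :=
      mul_le_mul_of_nonneg_right (hθ2 i) (hq_nonneg _ _)
    have h2 : θ i * q i.succ x ≤ ∑ j : Fin K, θ j * q j.succ x :=
      Finset.single_le_sum (f := fun j => θ j * q j.succ x)
        (fun j _ => mul_nonneg (hθ1 j).1 (hq_nonneg _ _)) (Finset.mem_univ i)
    have h3 : 0 ≤ (1 - ∑ i, θ i) * q 0 x :=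
      mul_nonneg (le_trans hτ.le hθ3) (hq_nonneg _ _)
    simp only [hpdef, mixP]
    linarith
  have hp0 : 0 ≤ p := le_trans (mul_nonneg hτ.le (hq_nonneg _ _)) hq0p
  have hpv : ∀ i, τ * |v i| ≤ p := by
    intro i
    have h1 := hq0p
    have h2 := hqip i
    have h3 : 0 ≤ τ * q 0 x := mul_nonneg hτ.le (hq_nonneg _ _)
    have h4 : 0 ≤ τ * q i.succ x := mul_nonneg hτ.le (hq_nonneg _ _)
    rcases abs_cases (v i) with ⟨he, _⟩ | ⟨he, _⟩ <;>
      (rw [he]; simp only [hvdef]; nlinarith)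
  have hv2 : ∑ i, (v i) ^ 2 ≤ K * (p ^ 2 / τ ^ 2) := by
    have hterm : ∀ i : Fin K, (v i) ^ 2 ≤ p ^ 2 / τ ^ 2 := by
      intro i
      rw [le_div_iff₀ (by positivity)]
      have h1 := hpv i
      have h2 : (τ * |v i|) ^ 2 ≤ p ^ 2 := by
        have := mul_self_le_mul_self (by positivity : (0:ℝ) ≤ τ * |v i|) h1
        nlinarith
      have h3 : (τ * |v i|) ^ 2 = v i ^ 2 * τ ^ 2 := by
        rw [mul_pow, sq_abs]; ring
      linarith [h3 ▸ h2]
    calc ∑ i, (v i) ^ 2 ≤ ∑ _i : Fin K, p ^ 2 / τ ^ 2 :=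
          Finset.sum_le_sum fun i _ => hterm i
      _ = K * (p ^ 2 / τ ^ 2) := by
          simp [Finset.sum_const, Finset.card_univ, nsmul_eq_mul]
  -- the norm of w
  have hw2 : ∑ i, (w i) ^ 2 ≤ ζ⁻¹ * ∑ i, (v i) ^ 2 := by
    have hdot : ∑ i, (w i) ^ 2 = v ⬝ᵥ J⁻¹.mulVec v := by
      have e1 : ∑ i, (w i) ^ 2 = w ⬝ᵥ w := by
        simp [dotProduct, sq]
      rw [e1, hwdef, Matrix.dotProduct_mulVec]
      have e2 : (S.mulVec v) ᵥ* S = (S * S).mulVec v := by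
        rw [← Matrix.mulVec_transpose, hST, Matrix.mulVec_mulVec]
      rw [e2, hSS, dotProduct_comm]
    rw [hdot]
    exact inv_quad_upper J ζ hζ hdet hquad v
  -- entries of the conjugated matrix
  have hentry : ∀ i j, (S * mixJhat1 q θ x * S) i j = w i * w j / p ^ 2 := by
    intro i j
    have hwi : w i = ∑ k, S i k * v k := rfl
    have hwj : w j = ∑ l, S j l * v l := rfl
    have hsym : ∀ a b, S a b = S b a := fun a b => by simpa using (hSH.apply a b).symm
    have hwj' : w j = ∑ l, S l j * v l := by
      rw [hwj]; exact Finset.sum_congr rfl fun l _ => by rw [hsym j l]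
    show ∑ l, (∑ k, S i k * mixJhat1 q θ x k l) * S l j = _
    simp only [mixJhat1, Matrix.of_apply, div_eq_mul_inv, ← hpdef]
    rw [hwi, hwj', Finset.sum_mul_sum]
    simp only [Finset.sum_mul]
    rw [Finset.sum_comm]
    refine Finset.sum_congr rfl fun k _ => Finset.sum_congr rfl fun l _ => ?_
    simp only [hvdef]
    ring
  -- per-entry bound
  have hwsq : ∑ i, (w i) ^ 2 ≤ ζ⁻¹ * (K * (p ^ 2 / τ ^ 2)) :=
    hw2.trans (mul_le_mul_of_nonneg_left hv2 (inv_nonneg.mpr hζ.le))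
  have hWbound : ∀ i j : Fin K, |w i * w j / p ^ 2| ≤ K / (ζ * τ ^ 2) := by
    intro i j
    have hKd : 0 ≤ (K : ℝ) / (ζ * τ ^ 2) := by positivity
    by_cases hp : p = 0
    · simp [hp, hKd]
    · have hppos : 0 < p := lt_of_le_of_ne hp0 (Ne.symm hp)
      have hp2 : 0 < p ^ 2 := by positivity
      have hwi : (w i) ^ 2 ≤ ∑ k, (w k) ^ 2 :=
        Finset.single_le_sum (f := fun k => (w k) ^ 2)
          (fun k _ => sq_nonneg _) (Finset.mem_univ i)
      have hwj : (w j) ^ 2 ≤ ∑ k, (w k) ^ 2 :=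
        Finset.single_le_sum (f := fun k => (w k) ^ 2)
          (fun k _ => sq_nonneg _) (Finset.mem_univ j)
      have hnum : |w i * w j| ≤ ζ⁻¹ * (K * (p ^ 2 / τ ^ 2)) := by
        rw [abs_mul]
        nlinarith [sq_nonneg (|w i| - |w j|), sq_abs (w i), sq_abs (w j),
          abs_nonneg (w i), abs_nonneg (w j), hwsq, hwi, hwj]
      rw [abs_div, abs_of_pos hp2, div_le_iff₀ hp2]
      calc |w i * w j| ≤ ζ⁻¹ * (K * (p ^ 2 / τ ^ 2)) := hnum
        _ = K / (ζ * τ ^ 2) * p ^ 2 := by field_simp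
  -- conclude
  apply Real.iSup_le
  · rintro ⟨i, j⟩
    have hK1 : (1 : ℝ) ≤ K := by
      have := i.pos
      exact_mod_cast this
    have hsqrtK : (1 : ℝ) ≤ Real.sqrt K := by
      rw [show (1:ℝ) = Real.sqrt 1 by simp]
      exact Real.sqrt_le_sqrt hK1
    have hmono : (K : ℝ) / (ζ * τ ^ 2) ≤ K * Real.sqrt K / (ζ * τ ^ 2) := by
      apply div_le_div_of_nonneg_right ?_ (by positivity)
      nlinarith [hK1, hsqrtK]
    have hone : |(1 : Matrix (Fin K) (Fin K) ℝ) i j| ≤ 1 := by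
      by_cases h : i = j <;> simp [Matrix.one_apply, h]
    have := hWbound i j
    calc |(S * mixJhat1 q θ x * S - 1) i j|
        = |(S * mixJhat1 q θ x * S) i j - (1 : Matrix (Fin K) (Fin K) ℝ) i j| := by
          simp [Matrix.sub_apply]
      _ ≤ |(S * mixJhat1 q θ x * S) i j| + |(1 : Matrix (Fin K) (Fin K) ℝ) i j| :=
          abs_sub _ _
      _ ≤ K / (ζ * τ ^ 2) + 1 := by
          rw [hentry i j]; exact add_le_add this hone
      _ ≤ K * Real.sqrt K / (ζ * τ ^ 2) + 1 := by linarith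
  · have : 0 ≤ (K : ℝ) * Real.sqrt K / (ζ * τ ^ 2) := by positivity
    linarith
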